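/- arXiv:2412.06399 — 4 statements merged into one kernel-verified Lean document; each statement's English description precedes it below -/
import Mathlib

section
/- Let α ∈ [0,1), let G be a finite simple graph with a nonempty set S of dominating vertices, let ℱ be the (disjoint) union of some of the connected components of G − S, and let c be a real number with Δ(ℱ) < c, where Δ(ℱ) is the maximum degree of ℱ. Let x be the positive Perron eigenvector of A_α(G) for λ_α(G), and set X_s = Σ_{v∈S} x_v, X_M = max_{v∈V(ℱ)} x_v, X_m = min_{v∈V(ℱ)} x_v. If λ_α(G) > α|S| + c, then X_m ≥ (1−α)X_s / (λ_α(G) − α|S|) and X_M < (1−α)X_s / (λ_α(G) − α|S| − c). -/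
open scoped Classical


/-- `H` is a minor of `G` (branch-set / minor-model definition). -/
def SimpleGraph.IsMinor {W V : Type*} (H : SimpleGraph W) (G : SimpleGraph V) : Prop :=
  ∃ f : W → Set V,
    (∀ w, (f w).Nonempty) ∧
    (∀ w, (G.induce (f w)).Connected) ∧
    (∀ w₁ w₂, w₁ ≠ w₂ → Disjoint (f w₁) (f w₂)) ∧
    (∀ w₁ w₂, H.Adj w₁ w₂ → ∃ v₁ ∈ f w₁, ∃ v₂ ∈ f w₂, G.Adj v₁ v₂)

/-- `G` has no `K_{a,b}`-minor. -/
def kabMinorFree (a b : ℕ) {V : Type*} (G : SimpleGraph V) : Prop :=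
  ¬ (completeBipartiteGraph (Fin a) (Fin b)).IsMinor G

/-- The `A_α`-matrix `α·D(G) + (1-α)·A(G)` of a graph. -/
noncomputable def aMatrix {V : Type*} [Fintype V] (G : SimpleGraph V) (α : ℝ) :
    Matrix V V ℝ :=
  Matrix.of fun u w =>
    (if u = w then α * ∑ z, (if G.Adj w z then (1 : ℝ) else 0) else 0)
    + (if G.Adj u w then (1 - α) else 0)

/-- The `A_α`-spectral radius: the largest eigenvalue of the `A_α`-matrix. -/
noncomputable def lambdaAlpha {V : Type*} [Fintype V] [DecidableEq V]
    (G : SimpleGraph V) (α : ℝ) : ℝ :=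
  sSup (spectrum ℝ (aMatrix G α))


/-- `τ = ⌊(b+1)/(a+1)⌋`, the number of stars of the star forest `F_{a,b}`. -/
def tauOf (a b : ℕ) : ℕ := (b + 1) / (a + 1)

/-- The star forest `F_{a,b}` on `b+1` vertices: the disjoint union of
`τ = ⌊(b+1)/(a+1)⌋` stars, `τ-1` of them isomorphic to `K_{1,a}` and one
isomorphic to `K_{1,c}` with `c = b - (a+1)(τ-1)`.  Vertex `i` belongs to the
block `min (i/(a+1)) (τ-1)`, first `τ-1` blocks of size `a+1`, whose first
vertex is the center of its star. -/
def starForest (a b : ℕ) : SimpleGraph (Fin (b + 1)) where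
  Adj i j := i ≠ j ∧
    min ((i : ℕ) / (a + 1)) (tauOf a b - 1) = min ((j : ℕ) / (a + 1)) (tauOf a b - 1) ∧
    ((i : ℕ) = min ((i : ℕ) / (a + 1)) (tauOf a b - 1) * (a + 1) ∨
     (j : ℕ) = min ((j : ℕ) / (a + 1)) (tauOf a b - 1) * (a + 1))
  symm := by
    constructor
    intro i j h
    exact ⟨h.1.symm, h.2.1.symm, h.2.2.symm⟩
  loopless := by constructor; intro i h; exact h.1 rfl

/-- `S^k(K_b)`: the complete graph `K_b` with one edge (between vertices `0`
and `1`) subdivided `k` times. -/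
def subdividedComplete (b k : ℕ) : SimpleGraph (Fin b ⊕ Fin k) where
  Adj x y :=
    match x, y with
    | Sum.inl i, Sum.inl j =>
        i ≠ j ∧ (k = 0 ∨ ¬(((i : ℕ) = 0 ∧ (j : ℕ) = 1) ∨ ((i : ℕ) = 1 ∧ (j : ℕ) = 0)))
    | Sum.inl i, Sum.inr p => ((i : ℕ) = 0 ∧ (p : ℕ) = 0) ∨ ((i : ℕ) = 1 ∧ (p : ℕ) = k - 1)
    | Sum.inr p, Sum.inl i => ((i : ℕ) = 0 ∧ (p : ℕ) = 0) ∨ ((i : ℕ) = 1 ∧ (p : ℕ) = k - 1)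
    | Sum.inr p, Sum.inr q => (p : ℕ) + 1 = (q : ℕ) ∨ (q : ℕ) + 1 = (p : ℕ)
  symm := by
    constructor
    rintro (i | p) (j | q) h
    · exact ⟨h.1.symm, by tauto⟩
    · exact h
    · exact h
    · tauto
  loopless := by
    constructor
    rintro (i | p) h
    · exact h.1 rfl
    · rcases h with h | h <;> omega

/-- The graph `F(a₁,a₂,a₃)`: a complete graph on `a₁+a₂+a₃ = b-1` vertices with
partition `V₁ ∪ V₂ ∪ V₃` (`|Vᵢ| = aᵢ`), together with a path `v₁v₂v₃` on three
new vertices, every vertex of `Vᵢ` joined to `vᵢ`. -/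
def fGraph (a₁ a₂ a₃ : ℕ) : SimpleGraph (Fin (a₁ + a₂ + a₃) ⊕ Fin 3) where
  Adj x y :=
    match x, y with
    | Sum.inl u, Sum.inl w => u ≠ w
    | Sum.inl u, Sum.inr i =>
        ((i : ℕ) = 0 ∧ (u : ℕ) < a₁) ∨
        ((i : ℕ) = 1 ∧ a₁ ≤ (u : ℕ) ∧ (u : ℕ) < a₁ + a₂) ∨
        ((i : ℕ) = 2 ∧ a₁ + a₂ ≤ (u : ℕ))
    | Sum.inr i, Sum.inl u =>
        ((i : ℕ) = 0 ∧ (u : ℕ) < a₁) ∨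
        ((i : ℕ) = 1 ∧ a₁ ≤ (u : ℕ) ∧ (u : ℕ) < a₁ + a₂) ∨
        ((i : ℕ) = 2 ∧ a₁ + a₂ ≤ (u : ℕ))
    | Sum.inr i, Sum.inr j => (i : ℕ) + 1 = (j : ℕ) ∨ (j : ℕ) + 1 = (i : ℕ)
  symm := by
    constructor
    rintro (u | i) (w | j) h
    · exact h.symm
    · exact h
    · exact h
    · tauto
  loopless := by
    constructor
    rintro (u | i) h
    · exact h rfl
    · rcases h with h | h <;> omega

/-- The Petersen graph: outer `5`-cycle, inner pentagram, five spokes. -/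
def petersen : SimpleGraph (Fin 5 ⊕ Fin 5) where
  Adj x y :=
    match x, y with
    | Sum.inl i, Sum.inl j => (j : ℕ) = ((i : ℕ) + 1) % 5 ∨ (i : ℕ) = ((j : ℕ) + 1) % 5
    | Sum.inl i, Sum.inr j => i = j
    | Sum.inr i, Sum.inl j => i = j
    | Sum.inr i, Sum.inr j => (j : ℕ) = ((i : ℕ) + 2) % 5 ∨ (i : ℕ) = ((j : ℕ) + 2) % 5
  symm := by
    constructor
    rintro (i | i) (j | j) h
    · tauto
    · exact h.symm
    · exact h.symm
    · tauto
  loopless := by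
    constructor
    rintro (i | i) h <;>
      · have hi : (i : ℕ) < 5 := i.isLt
        rcases h with h | h <;> omega

/-- The join `G ∨ H` of two graphs. -/
def joinG {V W : Type*} (G : SimpleGraph V) (H : SimpleGraph W) : SimpleGraph (V ⊕ W) where
  Adj x y :=
    match x, y with
    | Sum.inl u, Sum.inl w => G.Adj u w
    | Sum.inl _, Sum.inr _ => True
    | Sum.inr _, Sum.inl _ => True
    | Sum.inr u, Sum.inr w => H.Adj u w
  symm := by
    constructor
    rintro (u | u) (w | w) h
    · exact h.symm
    · trivial
    · trivial
    · exact h.symm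
  loopless := by
    constructor
    rintro (u | u) h
    · exact G.loopless.irrefl u h
    · exact H.loopless.irrefl u h

/-- The disjoint union of two graphs. -/
def disjUnion {V W : Type*} (G : SimpleGraph V) (H : SimpleGraph W) : SimpleGraph (V ⊕ W) where
  Adj x y :=
    match x, y with
    | Sum.inl u, Sum.inl w => G.Adj u w
    | Sum.inl _, Sum.inr _ => False
    | Sum.inr _, Sum.inl _ => False
    | Sum.inr u, Sum.inr w => H.Adj u w
  symm := by
    constructor
    rintro (u | u) (w | w) h
    · exact h.symm
    · exact h
    · exact h
    · exact h.symm
  loopless := by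
    constructor
    rintro (u | u) h
    · exact G.loopless.irrefl u h
    · exact H.loopless.irrefl u h

/-- `k` disjoint copies of the graph `H`. -/
def copies (k : ℕ) {W : Type*} (H : SimpleGraph W) : SimpleGraph (Fin k × W) where
  Adj x y := x.1 = y.1 ∧ H.Adj x.2 y.2
  symm := by constructor; rintro x y ⟨h1, h2⟩; exact ⟨h1.symm, h2.symm⟩
  loopless := by constructor; rintro x ⟨h1, h2⟩; exact H.loopless.irrefl _ h2

/-- `K_b^e`: the complete graph `K_b` with the edge between vertices `0` and
`1` removed and a pendant vertex attached to each of `0` and `1`. -/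
def kbE (b : ℕ) : SimpleGraph (Fin b ⊕ Fin 2) where
  Adj x y :=
    match x, y with
    | Sum.inl i, Sum.inl j =>
        i ≠ j ∧ ¬(((i : ℕ) = 0 ∧ (j : ℕ) = 1) ∨ ((i : ℕ) = 1 ∧ (j : ℕ) = 0))
    | Sum.inl i, Sum.inr p => (i : ℕ) = (p : ℕ)
    | Sum.inr p, Sum.inl i => (i : ℕ) = (p : ℕ)
    | Sum.inr _, Sum.inr _ => False
  symm := by
    constructor
    rintro (i | p) (j | q) h
    · exact ⟨h.1.symm, by tauto⟩
    · exact h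
    · exact h
    · exact h
  loopless := by
    constructor
    rintro (i | p) h
    · exact h.1 rfl
    · exact h

/-- The number of neighbours of `v` lying in the set `F`. -/
noncomputable def degIn {V : Type*} (G : SimpleGraph V) (F : Set V) (v : V) : ℕ :=
  (G.neighborSet v ∩ F).ncard

/-- `F` is a union of (vertex sets of) connected components of `G - S`. -/
def isComponentUnion {V : Type*} (G : SimpleGraph V) (S : Set V) (F : Set V) : Prop :=
  F ⊆ Sᶜ ∧ ∀ u v : ↥(Sᶜ : Set V), (G.induce Sᶜ).Reachable u v → (u : V) ∈ F → (v : V) ∈ F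

/-- A graph has the `(a,b)`-property if it is `K_{r,s}`-minor free for all
positive `r, s` with `r + s = b + 1` and `r ≤ ω = min {a, ⌊(b+1)/2⌋}`. -/
def abProperty (a b : ℕ) {V : Type*} (G : SimpleGraph V) : Prop :=
  ∀ r s : ℕ, 0 < r → 0 < s → r + s = b + 1 → r ≤ min a ((b + 1) / 2) →
    ¬ (completeBipartiteGraph (Fin r) (Fin s)).IsMinor G

/-- Bounds on the smallest and largest Perron entries on a union `F` of
components of `G - S`, where `S` is a set of dominating vertices of `G` and
the maximum degree of `F` is less than `c`. -/
theorem perron_entry_bounds_on_components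
    {V : Type} [Fintype V] [DecidableEq V]
    (α : ℝ) (hα0 : 0 ≤ α) (hα1 : α < 1)
    (G : SimpleGraph V) (S : Finset V) (hSne : S.Nonempty)
    (hdom : ∀ v ∈ S, ∀ u : V, u ≠ v → G.Adj v u)
    (F : Set V) (hF : isComponentUnion G (↑S) F) (hFne : F.Nonempty)
    (c : ℝ) (hc : ∀ v ∈ F, (degIn G F v : ℝ) < c)
    (x : V → ℝ) (hx : ∀ v, 0 < x v)
    (heig : (aMatrix G α).mulVec x = lambdaAlpha G α • x)
    (hgap : α * S.card + c < lambdaAlpha G α) :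
    (1 - α) * (∑ u ∈ S, x u) / (lambdaAlpha G α - α * S.card) ≤ sInf (x '' F) ∧
    sSup (x '' F) < (1 - α) * (∑ u ∈ S, x u) / (lambdaAlpha G α - α * S.card - c) := by
  classical
  set lam := lambdaAlpha G α with hlam
  set Xs := ∑ u ∈ S, x u with hXsdef
  have hXspos : 0 < Xs := Finset.sum_pos (fun u _ => hx u) hSne
  have hα1' : 0 < 1 - α := by linarith
  -- c is positive
  obtain ⟨v₀, hv₀⟩ := hFne
  have hcpos : 0 < c := lt_of_le_of_lt (by positivity) (hc v₀ hv₀)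
  have hDc : 0 < lam - α * S.card - c := by linarith
  have hD : 0 < lam - α * S.card := by linarith
  -- the filter of F-neighbors
  have hcardNF : ∀ v : V, (Finset.univ.filter (fun w => G.Adj v w ∧ w ∈ F)).card
      = degIn G F v := by
    intro v
    have hset : G.neighborSet v ∩ F
        = ↑(Finset.univ.filter (fun w => G.Adj v w ∧ w ∈ F)) := by
      ext w
      simp [SimpleGraph.mem_neighborSet]
    rw [degIn, hset, Set.ncard_coe_finset]
  -- key eigen-equation on F
  have key : ∀ v ∈ F, (lam - α * S.card) * x v
      = α * (degIn G F v : ℝ) * x v + (1 - α) * Xs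
        + (1 - α) * ∑ w ∈ Finset.univ.filter (fun w => G.Adj v w ∧ w ∈ F), x w := by
    intro v hv
    have hvS : v ∉ S := by
      have := hF.1 hv
      simpa using this
    set NF := Finset.univ.filter (fun w => G.Adj v w ∧ w ∈ F) with hNFdef
    set N := Finset.univ.filter (fun w => G.Adj v w) with hNdef
    have hNsplit : N = S ∪ NF := by
      ext w
      simp only [hNdef, hNFdef, Finset.mem_union, Finset.mem_filter, Finset.mem_univ,
        true_and]
      constructor
      · intro hadj
        by_cases hwS : w ∈ S
        · exact Or.inl hwS
        · refine Or.inr ⟨hadj, ?_⟩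
          have hvc : v ∈ ((↑S : Set V))ᶜ := hF.1 hv
          have hwc : w ∈ ((↑S : Set V))ᶜ := by simpa using hwS
          refine hF.2 ⟨v, hvc⟩ ⟨w, hwc⟩ ?_ hv
          exact SimpleGraph.Adj.reachable (by simpa using hadj)
      · rintro (hwS | ⟨hadj, _⟩)
        · have hne : v ≠ w := fun h => hvS (h ▸ hwS)
          exact (hdom w hwS v hne).symm
        · exact hadj
    have hdisj : Disjoint S NF := by
      rw [Finset.disjoint_left]
      intro w hwS hwNF
      have hwF : w ∈ F := by
        simp only [hNFdef, Finset.mem_filter] at hwNF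
        exact hwNF.2.2
      have := hF.1 hwF
      simp at this
      exact this hwS
    -- degree of v
    have hdeg : (∑ z, (if G.Adj v z then (1 : ℝ) else 0)) = (S.card : ℝ) + (NF.card : ℝ) := by
      rw [Finset.sum_boole]
      have : Finset.univ.filter (fun z => G.Adj v z) = N := rfl
      rw [this, hNsplit, Finset.card_union_of_disjoint hdisj]
      push_cast
      ring
    -- eigen equation at v
    have hv' : (aMatrix G α).mulVec x v = lam * x v := by
      have := congrFun heig v
      simpa using this
    have hmv : (aMatrix G α).mulVec x v
        = α * ((S.card : ℝ) + (NF.card : ℝ)) * x v + (1 - α) * ∑ w ∈ N, x w := by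
      rw [Matrix.mulVec]
      simp only [dotProduct, aMatrix, Matrix.of_apply, add_mul, ite_mul, zero_mul,
        Finset.sum_add_distrib, Finset.sum_ite_eq, Finset.mem_univ, if_true]
      rw [hdeg, hNdef, Finset.sum_filter, Finset.mul_sum]
      have hpull : ∀ w : V, (1 - α) * (if G.Adj v w then x w else 0)
          = (if G.Adj v w then (1 - α) * x w else 0) := fun w => by
        by_cases h : G.Adj v w <;> simp [h]
      simp only [hpull]
    have hsplit : ∑ w ∈ N, x w = Xs + ∑ w ∈ NF, x w := by
      rw [hNsplit, Finset.sum_union hdisj]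
    have hNFcard : (NF.card : ℝ) = (degIn G F v : ℝ) := by
      exact_mod_cast congrArg Nat.cast (hcardNF v)
    rw [hmv, hsplit, hNFcard] at hv'
    linarith [hv']
  -- lower bound
  have hlow : (1 - α) * Xs / (lam - α * S.card) ≤ sInf (x '' F) := by
    refine le_csInf ⟨x v₀, Set.mem_image_of_mem x hv₀⟩ ?_
    rintro b ⟨v, hv, rfl⟩
    rw [div_le_iff₀ hD]
    have h1 : 0 ≤ α * (degIn G F v : ℝ) * x v :=
      mul_nonneg (mul_nonneg hα0 (Nat.cast_nonneg _)) (hx v).le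
    have h2 : 0 ≤ ∑ w ∈ Finset.univ.filter (fun w => G.Adj v w ∧ w ∈ F), x w :=
      Finset.sum_nonneg fun w _ => (hx w).le
    have := key v hv
    nlinarith [this]
  refine ⟨hlow, ?_⟩
  -- upper bound
  have hfin : (x '' F).Finite := (Set.toFinite F).image x
  have hmem : sSup (x '' F) ∈ x '' F := Set.Nonempty.csSup_mem ⟨x v₀, Set.mem_image_of_mem x hv₀⟩ hfin
  obtain ⟨m, hmF, hmx⟩ := hmem
  have hmax : ∀ v ∈ F, x v ≤ x m := by
    intro v hv
    rw [hmx]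
    exact le_csSup hfin.bddAbove ⟨v, hv, rfl⟩
  have hsumle : ∑ w ∈ Finset.univ.filter (fun w => G.Adj m w ∧ w ∈ F), x w
      ≤ (degIn G F m : ℝ) * x m := by
    rw [← hcardNF m]
    calc ∑ w ∈ Finset.univ.filter (fun w => G.Adj m w ∧ w ∈ F), x w
        ≤ ∑ _w ∈ Finset.univ.filter (fun w => G.Adj m w ∧ w ∈ F), x m := by
          apply Finset.sum_le_sum
          intro w hw
          simp only [Finset.mem_filter] at hw
          exact hmax w hw.2.2
      _ = _ := by rw [Finset.sum_const, nsmul_eq_mul]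
  have hkeym := key m hmF
  have hdm : (degIn G F m : ℝ) < c := hc m hmF
  have hxm : 0 < x m := hx m
  have hineq : (lam - α * S.card - c) * x m < (1 - α) * Xs := by
    nlinarith [hkeym, hsumle, hdm, hxm]
  rw [← hmx]
  rw [lt_div_iff₀ hDc]
  linarith
end

section
/- Let α ∈ [0,1), let c > 0 and s ≥ 1 and real constants p > q > 0. There exists N (depending on α, c, s, p, q) such that the following holds for every graph G on n ≥ N vertices having a set S of exactly s dominating vertices: if ℱ is the union of some connected components of G − S with maximum degree Δ(ℱ) < c, x is the positive Perron eigenvector of A_α(G) for λ_α(G), X_M = max_{v∈V(ℱ)} x_v and X_m = min_{v∈V(ℱ)} x_v, then p·X_m > q·X_M and p·X_m² > q·X_M²; moreover, for any two vertices u, v ∈ V(ℱ) with d_ℱ(u) > d_ℱ(v) one has x_u > x_v, where d_ℱ denotes degree within ℱ. -/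
open scoped Classical


set_option maxHeartbeats 1000000 in
/-- For `n` large, the Perron entries on a union of bounded-degree components
of `G - S` (`S` a set of `s` dominating vertices) are comparable: `p·X_m > q·X_M`,
`p·X_m² > q·X_M²`, and entries increase with degree inside `F`. -/
theorem perron_entries_comparable_on_components
    (α : ℝ) (hα0 : 0 ≤ α) (hα1 : α < 1)
    (c : ℝ) (hc : 0 < c) (s : ℕ) (hs : 1 ≤ s)
    (p q : ℝ) (hq : 0 < q) (hpq : q < p) :
    ∃ N : ℕ, ∀ (V : Type) [Fintype V] [DecidableEq V], N ≤ Fintype.card V →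
      ∀ (G : SimpleGraph V) (S : Finset V), S.card = s →
        (∀ v ∈ S, ∀ u : V, u ≠ v → G.Adj v u) →
        ∀ F : Set V, isComponentUnion G (↑S) F →
          (∀ v ∈ F, (degIn G F v : ℝ) < c) →
          ∀ x : V → ℝ, (∀ v, 0 < x v) →
            (aMatrix G α).mulVec x = lambdaAlpha G α • x →
            (∀ u ∈ F, ∀ v ∈ F, q * x v < p * x u) ∧
            (∀ u ∈ F, ∀ v ∈ F, q * x v ^ 2 < p * x u ^ 2) ∧
            (∀ u ∈ F, ∀ v ∈ F, degIn G F v < degIn G F u → x v < x u) := by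
  have hβ0 : (0:ℝ) < 1 - α := by linarith
  obtain ⟨K, hKdef⟩ : ∃ K : ℝ, K = α * ((s:ℝ) + c) + (1 - α) * c := ⟨_, rfl⟩
  have hK0 : 0 < K := by
    rw [hKdef]
    have h1 : (0:ℝ) ≤ α * ((s:ℝ) + c) := by positivity
    nlinarith
  obtain ⟨M, hMdef⟩ : ∃ M : ℝ, M = 3 * q / (p - q) + 1 := ⟨_, rfl⟩
  have hpq' : (0:ℝ) < p - q := by linarith
  have hM1 : (1:ℝ) ≤ M := by
    rw [hMdef]
    have := div_nonneg (by linarith : (0:ℝ) ≤ 3 * q) hpq'.le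
    linarith
  have h3q : 3 * q < M * (p - q) := by
    have h : M * (p - q) = 3 * q + (p - q) := by
      rw [hMdef, add_mul, div_mul_cancel₀ _ (ne_of_gt hpq'), one_mul]
    linarith
  obtain ⟨lam0, hlam0def⟩ : ∃ L : ℝ, L = K * (1 + M) + K * (1 + c) + 1 := ⟨_, rfl⟩
  have hlam00 : 0 < lam0 := by
    rw [hlam0def]
    nlinarith [mul_pos hK0 hc, mul_nonneg hK0.le (by linarith : (0:ℝ) ≤ M)]
  obtain ⟨N0, hN0⟩ := exists_nat_gt ((lam0 / (1 - α)) ^ 2 + 1)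
  refine ⟨max N0 2, ?_⟩
  intro V _ _ hcard G S hScard hdom F hF hdegF x hx heig
  classical
  set n := Fintype.card V with hn
  have hn2 : 2 ≤ n := le_trans (le_max_right _ _) hcard
  have hnN0 : ((lam0 / (1 - α)) ^ 2 : ℝ) ≤ (n:ℝ) - 1 := by
    have h1 : (N0:ℝ) ≤ (n:ℝ) := by
      exact_mod_cast le_trans (le_max_left _ _) hcard
    linarith
  obtain ⟨w0, hw0S⟩ : ∃ w, w ∈ S := Finset.card_pos.mp (by omega)
  set lam := lambdaAlpha G α with hlamdef
  -- pointwise eigen-equation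
  have heq : ∀ v, α * (∑ z, (if G.Adj v z then (1:ℝ) else 0)) * x v
      + (1 - α) * (∑ w, if G.Adj v w then x w else 0) = lam * x v := by
    intro v
    have h0 := congrFun heig v
    simp only [Matrix.mulVec, dotProduct, aMatrix, Matrix.of_apply, Pi.smul_apply,
      smul_eq_mul, add_mul, ite_mul, zero_mul, Finset.sum_add_distrib, Finset.sum_ite_eq,
      Finset.mem_univ, if_true] at h0
    rw [← h0]
    congr 1
    rw [Finset.mul_sum]
    simp only [mul_ite, mul_zero]
  -- lower bound on lam
  have hne : (Finset.univ.erase w0).Nonempty := by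
    rw [← Finset.card_pos, Finset.card_erase_of_mem (Finset.mem_univ _), Finset.card_univ]
    omega
  obtain ⟨m, hm, hmmin⟩ := Finset.exists_min_image _ x hne
  have hmne : m ≠ w0 := (Finset.mem_erase.mp hm).1
  have hAdjmw0 : G.Adj m w0 := (hdom w0 hw0S m hmne).symm
  have hdegnn : ∀ v, (0:ℝ) ≤ ∑ z, (if G.Adj v z then (1:ℝ) else 0) := by
    intro v
    refine Finset.sum_nonneg fun w _ => ?_
    split <;> norm_num
  have h1 : (1 - α) * x w0 ≤ lam * x m := by
    have h0 := heq m
    have hterm : x w0 ≤ ∑ w, if G.Adj m w then x w else 0 := by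
      have := Finset.single_le_sum (f := fun w => if G.Adj m w then x w else 0)
        (fun i _ => by split
                       · exact (hx i).le
                       · exact le_refl 0) (Finset.mem_univ w0)
      simpa [hAdjmw0] using this
    have hnn : 0 ≤ α * (∑ z, (if G.Adj m z then (1:ℝ) else 0)) * x m :=
      mul_nonneg (mul_nonneg hα0 (hdegnn m)) (hx m).le
    have hle2 : (1 - α) * x w0 ≤ (1 - α) * (∑ w, if G.Adj m w then x w else 0) :=
      mul_le_mul_of_nonneg_left hterm hβ0.le
    linarith
  have h2 : (1 - α) * ((n:ℝ) - 1) * x m ≤ lam * x w0 := by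
    have h0 := heq w0
    have hfilter : Finset.univ.filter (fun w => G.Adj w0 w) = Finset.univ.erase w0 := by
      ext w
      simp only [Finset.mem_filter, Finset.mem_univ, true_and, Finset.mem_erase, and_true]
      constructor
      · intro h hh
        exact G.irrefl (hh ▸ h)
      · intro h
        exact hdom w0 hw0S w h
    have hsum : ((n:ℝ) - 1) * x m ≤ ∑ w, if G.Adj w0 w then x w else 0 := by
      rw [← Finset.sum_filter, hfilter]
      have hle : (Finset.univ.erase w0).card • x m ≤ ∑ w ∈ Finset.univ.erase w0, x w :=
        Finset.card_nsmul_le_sum _ _ _ (fun w hw => hmmin w hw)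
      have hcardE : (Finset.univ.erase w0).card = n - 1 := by
        rw [Finset.card_erase_of_mem (Finset.mem_univ _), Finset.card_univ]
      rw [hcardE, nsmul_eq_mul] at hle
      have : ((n - 1 : ℕ) : ℝ) = (n:ℝ) - 1 := by
        have : 1 ≤ n := by omega
        push_cast [this]
        ring
      rwa [this] at hle
    have hnn : 0 ≤ α * (∑ z, (if G.Adj w0 z then (1:ℝ) else 0)) * x w0 :=
      mul_nonneg (mul_nonneg hα0 (hdegnn w0)) (hx w0).le
    have hle2 : (1 - α) * (((n:ℝ) - 1) * x m)
        ≤ (1 - α) * (∑ w, if G.Adj w0 w then x w else 0) :=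
      mul_le_mul_of_nonneg_left hsum hβ0.le
    nlinarith
  have hlampos : 0 < lam := by
    by_contra h
    push_neg at h
    have h3 : lam * x m ≤ 0 := mul_nonpos_of_nonpos_of_nonneg h (hx m).le
    have h4 : 0 < (1 - α) * x w0 := mul_pos hβ0 (hx w0)
    linarith
  have hlamlb : lam0 ≤ lam := by
    have hprod : ((1 - α) * ((n:ℝ) - 1) * x m) * ((1 - α) * x w0)
        ≤ (lam * x w0) * (lam * x m) := by
      exact mul_le_mul h2 h1 (mul_nonneg hβ0.le (hx w0).le)
        (mul_nonneg hlampos.le (hx w0).le)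
    have hsq : lam0 ^ 2 ≤ lam ^ 2 := by
      have hb : lam0 ^ 2 ≤ (1 - α) ^ 2 * ((n:ℝ) - 1) := by
        have := hnN0
        have hd : (lam0 / (1 - α)) ^ 2 * (1 - α) ^ 2 = lam0 ^ 2 := by
          field_simp
        nlinarith [sq_nonneg (1 - α)]
      have h1' : lam0 ^ 2 * (x m * x w0) ≤ (1 - α) ^ 2 * ((n:ℝ) - 1) * (x m * x w0) :=
        mul_le_mul_of_nonneg_right hb (mul_pos (hx m) (hx w0)).le
      have h2' : (1 - α) ^ 2 * ((n:ℝ) - 1) * (x m * x w0) ≤ lam ^ 2 * (x m * x w0) := by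
        nlinarith [hprod]
      exact le_of_mul_le_mul_right (h1'.trans h2') (mul_pos (hx m) (hx w0))
    nlinarith [hsq, hlampos, hlam00, sq_nonneg (lam - lam0)]
  -- structure of neighborhoods inside F
  set NF : V → Finset V := fun v => Finset.univ.filter (fun w => G.Adj v w ∧ w ∈ F)
    with hNFdef
  have hnb : ∀ v ∈ F, Finset.univ.filter (fun w => G.Adj v w) = S ∪ NF v := by
    intro v hv
    ext w
    simp only [hNFdef, Finset.mem_filter, Finset.mem_univ, true_and, Finset.mem_union]
    constructor
    · intro hA
      by_cases hwS : w ∈ S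
      · exact Or.inl hwS
      · refine Or.inr ⟨hA, ?_⟩
        have hvS : v ∈ (↑S : Set V)ᶜ := hF.1 hv
        have hwS' : w ∈ (↑S : Set V)ᶜ := by simpa using hwS
        exact hF.2 ⟨v, hvS⟩ ⟨w, hwS'⟩ (SimpleGraph.Adj.reachable hA) hv
    · rintro (hwS | ⟨hA, _⟩)
      · have hvS : v ∉ S := by
          have := hF.1 hv
          simpa using this
        have hvw : v ≠ w := by
          rintro rfl
          exact hvS hwS
        exact (hdom w hwS v hvw).symm
      · exact hA
  have hdisj : ∀ v ∈ F, Disjoint S (NF v) := by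
    intro v hv
    refine Finset.disjoint_left.mpr fun w hwS hwNF => ?_
    have hwF : w ∈ F := by
      simp only [hNFdef, Finset.mem_filter] at hwNF
      exact hwNF.2.2
    have := hF.1 hwF
    simp only [Set.mem_compl_iff, Finset.coe_sort_coe, Finset.mem_coe] at this
    exact this hwS
  have hdegIn : ∀ v ∈ F, degIn G F v = (NF v).card := by
    intro v hv
    have hset : G.neighborSet v ∩ F = ↑(NF v) := by
      ext w
      simp [hNFdef, SimpleGraph.mem_neighborSet]
    rw [degIn, hset, Set.ncard_coe_finset]
  have heqF : ∀ v ∈ F, α * ((s:ℝ) + ((NF v).card : ℝ)) * x v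
      + (1 - α) * ((∑ w ∈ S, x w) + ∑ w ∈ NF v, x w) = lam * x v := by
    intro v hv
    have h0 := heq v
    have hsum1 : (∑ z, if G.Adj v z then (1:ℝ) else 0) = (s:ℝ) + ((NF v).card : ℝ) := by
      rw [Finset.sum_boole, hnb v hv, Finset.card_union_of_disjoint (hdisj v hv), hScard]
      push_cast
      ring
    have hsum2 : (∑ w, if G.Adj v w then x w else 0)
        = (∑ w ∈ S, x w) + ∑ w ∈ NF v, x w := by
      rw [← Finset.sum_filter, hnb v hv, Finset.sum_union (hdisj v hv)]
    rw [hsum1, hsum2] at h0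
    exact h0
  have hkF : ∀ v ∈ F, ((NF v).card : ℝ) < c := by
    intro v hv
    have := hdegF v hv
    rwa [hdegIn v hv] at this
  have hSnn : (0:ℝ) ≤ ∑ w ∈ S, x w := Finset.sum_nonneg fun w _ => (hx w).le
  -- main comparison for extremal vertices
  have hmain : ∀ u0 ∈ F, ∀ v0 ∈ F, (∀ w ∈ F, x w ≤ x u0) →
      (lam - K) * x u0 ≤ lam * x v0 := by
    intro u0 hu0 v0 hv0 hmax
    have e1 := heqF u0 hu0
    have e2 := heqF v0 hv0
    have hb1 : ∑ w ∈ NF u0, x w ≤ c * x u0 := by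
      have hle : ∑ w ∈ NF u0, x w ≤ (NF u0).card • x u0 := by
        refine Finset.sum_le_card_nsmul _ _ _ fun w hw => ?_
        have hwF : w ∈ F := by
          simp only [hNFdef, Finset.mem_filter] at hw
          exact hw.2.2
        exact hmax w hwF
      rw [nsmul_eq_mul] at hle
      have h := mul_le_mul_of_nonneg_right (le_of_lt (hkF u0 hu0)) (hx u0).le
      linarith
    have hb2 : (0:ℝ) ≤ ∑ w ∈ NF v0, x w := Finset.sum_nonneg fun w hw => (hx w).le
    have hA1 : α * ((s:ℝ) + ((NF u0).card : ℝ)) * x u0 ≤ α * ((s:ℝ) + c) * x u0 := by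
      have h := hkF u0 hu0
      have h2 := mul_le_mul_of_nonneg_left
        (by linarith : (s:ℝ) + ((NF u0).card : ℝ) ≤ (s:ℝ) + c) hα0
      exact mul_le_mul_of_nonneg_right h2 (hx u0).le
    have hA2 : (0:ℝ) ≤ α * ((s:ℝ) + ((NF v0).card : ℝ)) * x v0 :=
      mul_nonneg (mul_nonneg hα0 (by positivity)) (hx v0).le
    have hrw : (lam - K) * x u0
        = lam * x u0 - α * ((s:ℝ) + c) * x u0 - (1 - α) * (c * x u0) := by
      rw [hKdef]; ring
    have hB1 : (1 - α) * ((∑ w ∈ S, x w) + ∑ w ∈ NF u0, x w)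
        ≤ (1 - α) * (∑ w ∈ S, x w) + (1 - α) * (c * x u0) := by
      linarith [mul_le_mul_of_nonneg_left hb1 hβ0.le]
    have hB2 : (1 - α) * (∑ w ∈ S, x w)
        ≤ (1 - α) * ((∑ w ∈ S, x w) + ∑ w ∈ NF v0, x w) := by
      linarith [mul_nonneg hβ0.le hb2]
    linarith
  -- threshold consequences
  have hKc : (0:ℝ) ≤ K * c := (mul_pos hK0 hc).le
  have hKM0 : (0:ℝ) ≤ K * M := mul_nonneg hK0.le (by linarith)
  have hlam0eq : lam0 = K + K * M + K + K * c + 1 := by rw [hlam0def]; ring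
  have hlamKM : K * M ≤ lam - K := by linarith [hlamlb]
  have hlamKc : K * (1 + c) + 1 ≤ lam - K := by nlinarith [hlamlb]
  have htpos : (0:ℝ) < lam - K := by linarith [hlamlb]
  have hql : q * lam < p * (lam - K) := by
    linarith [mul_le_mul_of_nonneg_left hlamKM (le_of_lt hpq'),
      mul_lt_mul_of_pos_left h3q hK0, mul_pos hq hK0]
  have hql2 : q * lam ^ 2 < p * (lam - K) ^ 2 := by
    have hM0 : (0:ℝ) < M := by linarith
    have h1' : (K * M) * (K * M) ≤ (lam - K) * (lam - K) :=
      mul_self_le_mul_self hKM0 hlamKM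
    have e1' : q * (K * M * (K * M)) ≤ q * ((lam - K) * (lam - K)) :=
      mul_le_mul_of_nonneg_left h1' hq.le
    have h2' := mul_le_mul_of_nonneg_left hlamKM
      (mul_nonneg (by linarith : (0:ℝ) ≤ 2 * q) htpos.le)
    have h3' := mul_le_mul_of_nonneg_right h2' hM0.le
    have e3' := mul_lt_mul_of_pos_right h3q
      (mul_pos hM0 (pow_pos htpos 2))
    have e5' := mul_le_mul_of_nonneg_right hM1
      (mul_nonneg hq.le (sq_nonneg (lam - K)))
    have e4' : M ^ 2 * (q * lam ^ 2) < M ^ 2 * (p * (lam - K) ^ 2) := by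
      nlinarith [e1', h3', e3', e5']
    exact lt_of_mul_lt_mul_left e4' (by positivity)
  -- the per-pair key statement
  have key : ∀ u0 ∈ F, ∀ v0 ∈ F, (∀ w ∈ F, x w ≤ x u0) → (∀ w ∈ F, x v0 ≤ x w) →
      (q * x u0 < p * x v0) ∧ (q * x u0 ^ 2 < p * x v0 ^ 2) ∧
      (c * x u0 < (1 + c) * x v0) := by
    intro u0 hu0 v0 hv0 hmax hmin
    have hm0 := hmain u0 hu0 v0 hv0 hmax
    have hxu := hx u0
    have hxv := hx v0
    constructor
    · have h5 : q * ((lam - K) * x u0) ≤ q * (lam * x v0) :=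
        mul_le_mul_of_nonneg_left hm0 hq.le
      have h6 := mul_lt_mul_of_pos_right hql hxv
      have h7 : (lam - K) * (q * x u0) < (lam - K) * (p * x v0) := by linarith [h5, h6]
      exact lt_of_mul_lt_mul_left h7 htpos.le
    constructor
    · have hsq : ((lam - K) * x u0) ^ 2 ≤ (lam * x v0) ^ 2 :=
        pow_le_pow_left₀ (mul_nonneg htpos.le hxu.le) hm0 2
      have h5 := mul_le_mul_of_nonneg_left hsq hq.le
      have h6 := mul_lt_mul_of_pos_right hql2 (pow_pos hxv 2)
      have h7 : (lam - K) ^ 2 * (q * x u0 ^ 2) < (lam - K) ^ 2 * (p * x v0 ^ 2) := by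
        nlinarith [h5, h6]
      exact lt_of_mul_lt_mul_left h7 (by positivity)
    · -- c * x u0 < (1+c) * x v0
      have hcl : c * lam < (1 + c) * (lam - K) := by
        linarith [hlamlb, hlam0eq, hKM0, hK0]
      have h5 := mul_le_mul_of_nonneg_left hm0 hc.le
      have h6 := mul_lt_mul_of_pos_right hcl hxv
      have h7 : (lam - K) * (c * x u0) < (lam - K) * ((1 + c) * x v0) := by
        linarith [h5, h6]
      exact lt_of_mul_lt_mul_left h7 htpos.le
  refine ⟨?_, ?_, ?_⟩
  · intro u hu v hv
    obtain ⟨u0, hu0, hmax⟩ := Finset.exists_max_image (Finset.univ.filter (· ∈ F)) x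
      ⟨u, by simp [hu]⟩
    obtain ⟨v0, hv0, hmin⟩ := Finset.exists_min_image (Finset.univ.filter (· ∈ F)) x
      ⟨u, by simp [hu]⟩
    have hu0F : u0 ∈ F := by simpa using hu0
    have hv0F : v0 ∈ F := by simpa using hv0
    have hK := key u0 hu0F v0 hv0F
      (fun w hw => hmax w (by simp [hw])) (fun w hw => hmin w (by simp [hw]))
    have h1' : x v ≤ x u0 := hmax v (by simp [hv])
    have h2' : x v0 ≤ x u := hmin u (by simp [hu])
    linarith [hK.1, mul_le_mul_of_nonneg_left h1' hq.le,
      mul_le_mul_of_nonneg_left h2' (by linarith : (0:ℝ) ≤ p)]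
  · intro u hu v hv
    obtain ⟨u0, hu0, hmax⟩ := Finset.exists_max_image (Finset.univ.filter (· ∈ F)) x
      ⟨u, by simp [hu]⟩
    obtain ⟨v0, hv0, hmin⟩ := Finset.exists_min_image (Finset.univ.filter (· ∈ F)) x
      ⟨u, by simp [hu]⟩
    have hu0F : u0 ∈ F := by simpa using hu0
    have hv0F : v0 ∈ F := by simpa using hv0
    have hK := key u0 hu0F v0 hv0F
      (fun w hw => hmax w (by simp [hw])) (fun w hw => hmin w (by simp [hw]))
    have h1' : x v ≤ x u0 := hmax v (by simp [hv])
    have h2' : x v0 ≤ x u := hmin u (by simp [hu])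
    linarith [hK.2.1,
      mul_le_mul_of_nonneg_left (pow_le_pow_left₀ (hx v).le h1' 2) hq.le,
      mul_le_mul_of_nonneg_left (pow_le_pow_left₀ (hx v0).le h2' 2)
        (by linarith : (0:ℝ) ≤ p)]
  · intro u hu v hv hdlt
    obtain ⟨u0, hu0, hmax⟩ := Finset.exists_max_image (Finset.univ.filter (· ∈ F)) x
      ⟨u, by simp [hu]⟩
    obtain ⟨v0, hv0, hmin⟩ := Finset.exists_min_image (Finset.univ.filter (· ∈ F)) x
      ⟨u, by simp [hu]⟩
    have hu0F : u0 ∈ F := by simpa using hu0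
    have hv0F : v0 ∈ F := by simpa using hv0
    have hK := key u0 hu0F v0 hv0F
      (fun w hw => hmax w (by simp [hw])) (fun w hw => hmin w (by simp [hw]))
    have hc1 := hK.2.2
    -- degree comparison
    rw [hdegIn u hu, hdegIn v hv] at hdlt
    have hkuv : ((NF v).card : ℝ) + 1 ≤ ((NF u).card : ℝ) := by exact_mod_cast hdlt
    have hSu : ((NF u).card : ℝ) * x v0 ≤ ∑ w ∈ NF u, x w := by
      have hle : (NF u).card • x v0 ≤ ∑ w ∈ NF u, x w := by
        refine Finset.card_nsmul_le_sum _ _ _ fun w hw => ?_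
        have hwF : w ∈ F := by
          simp only [hNFdef, Finset.mem_filter] at hw
          exact hw.2.2
        exact hmin w (by simp [hwF])
      rwa [nsmul_eq_mul] at hle
    have hSv : ∑ w ∈ NF v, x w ≤ ((NF v).card : ℝ) * x u0 := by
      have hle : ∑ w ∈ NF v, x w ≤ (NF v).card • x u0 := by
        refine Finset.sum_le_card_nsmul _ _ _ fun w hw => ?_
        have hwF : w ∈ F := by
          simp only [hNFdef, Finset.mem_filter] at hw
          exact hw.2.2
        exact hmax w (by simp [hwF])
      rwa [nsmul_eq_mul] at hle
    have hx0le : x v0 ≤ x u0 := hmin u0 (by simp [hu0F])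
    have hkvc : ((NF v).card : ℝ) < c := hkF v hv
    have hkuc : ((NF u).card : ℝ) < c := hkF u hu
    have eu := heqF u hu
    have ev := heqF v hv
    have hiden : (lam - α * ((s:ℝ) + ((NF u).card : ℝ))) * (x u - x v)
        = α * (((NF u).card : ℝ) - ((NF v).card : ℝ)) * x v
          + (1 - α) * ((∑ w ∈ NF u, x w) - ∑ w ∈ NF v, x w) := by
      linear_combination ev - eu
    have hRHS : 0 < α * (((NF u).card : ℝ) - ((NF v).card : ℝ)) * x v
          + (1 - α) * ((∑ w ∈ NF u, x w) - ∑ w ∈ NF v, x w) := by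
      have hd1 : ((NF v).card : ℝ) * (x u0 - x v0) ≤ c * (x u0 - x v0) :=
        mul_le_mul_of_nonneg_right (le_of_lt hkvc) (by linarith : (0:ℝ) ≤ x u0 - x v0)
      have hd2 : (((NF v).card : ℝ) + 1) * x v0 ≤ ((NF u).card : ℝ) * x v0 :=
        mul_le_mul_of_nonneg_right hkuv (hx v0).le
      have hgap : 0 < (∑ w ∈ NF u, x w) - ∑ w ∈ NF v, x w := by
        linarith [hSu, hSv, hd2, hd1, hc1, hx v0]
      have ht1 : (0:ℝ) ≤ α * (((NF u).card : ℝ) - ((NF v).card : ℝ)) * x v :=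
        mul_nonneg (mul_nonneg hα0 (by linarith)) (hx v).le
      have ht2 : 0 < (1 - α) * ((∑ w ∈ NF u, x w) - ∑ w ∈ NF v, x w) :=
        mul_pos hβ0 hgap
      linarith
    have hfac : 0 < lam - α * ((s:ℝ) + ((NF u).card : ℝ)) := by
      have h1' : α * ((s:ℝ) + ((NF u).card : ℝ)) ≤ α * ((s:ℝ) + c) :=
        mul_le_mul_of_nonneg_left (by linarith) hα0
      have h2' : α * ((s:ℝ) + c) ≤ K := by
        rw [hKdef]
        linarith [mul_pos hβ0 hc]
      linarith [htpos]
    by_contra hcon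
    push_neg at hcon
    have hnp : (lam - α * ((s:ℝ) + ((NF u).card : ℝ))) * (x u - x v) ≤ 0 :=
      mul_nonpos_of_nonneg_of_nonpos hfac.le (by linarith)
    linarith [hiden, hRHS]
end

section
/- Let b ≥ 3 and α ∈ [0,1). Then λ_α(K_b^e) > b − 1 − 2(1−α)/(b−1), where K_b^e is the graph obtained from the complete graph K_b by deleting one edge uv and attaching one new pendant vertex to u and one new pendant vertex to v. -/
open scoped Classical


open Matrix in
lemma rayleigh_le_sSup_spectrum' {n : Type*} [Fintype n] [DecidableEq n]
    (M : Matrix n n ℝ) (hM : M.IsHermitian) (x : n → ℝ) :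
    dotProduct x (M *ᵥ x) ≤ sSup (spectrum ℝ M) * dotProduct x x := by
  set L := sSup (spectrum ℝ M) with hLdef
  have hspec := hM.spectrum_real_eq_range_eigenvalues
  have hbdd : BddAbove (spectrum ℝ M) := by
    rw [hspec]; exact (Set.finite_range _).bddAbove
  have hL : ∀ i : n, hM.eigenvalues i ≤ L :=
    fun i => le_csSup hbdd (hM.eigenvalues_mem_spectrum_real i)
  let y : EuclideanSpace ℝ n := WithLp.toLp 2 x
  set B := hM.eigenvectorBasis with hB
  have hMT : Mᵀ = M := by
    have := hM
    rwa [Matrix.IsHermitian, Matrix.conjTranspose_eq_transpose_of_trivial] at this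
  have hrepr : ∀ i : n, B.repr (WithLp.toLp 2 (M *ᵥ x) : EuclideanSpace ℝ n) i
      = hM.eigenvalues i * B.repr y i := by
    intro i
    rw [B.repr_apply_apply, B.repr_apply_apply]
    have h1 : (inner ℝ (B i) (WithLp.toLp 2 (M *ᵥ x) : EuclideanSpace ℝ n) : ℝ)
        = dotProduct (B i) (M *ᵥ x) := by
      simp [PiLp.inner_apply, dotProduct, mul_comm]
    have h2 : (inner ℝ (B i) y : ℝ) = dotProduct (B i) x := by
      simp [PiLp.inner_apply, dotProduct, y, mul_comm]
    rw [h1, h2]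
    have h4 : ∀ v : n → ℝ, v ⬝ᵥ (M *ᵥ x) = (M *ᵥ v) ⬝ᵥ x := by
      intro v
      rw [dotProduct_mulVec, ← Matrix.mulVec_transpose, hMT]
    rw [h4]
    calc (M *ᵥ (⇑(B i) : n → ℝ)) ⬝ᵥ x
        = (hM.eigenvalues i • (⇑(B i) : n → ℝ)) ⬝ᵥ x :=
          congrArg (· ⬝ᵥ x) (hM.mulVec_eigenvectorBasis i)
      _ = hM.eigenvalues i * ((⇑(B i) : n → ℝ) ⬝ᵥ x) := by
          simp [smul_dotProduct]
  have hinner : ∀ z w : EuclideanSpace ℝ n,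
      (inner ℝ z w : ℝ) = ∑ i, B.repr z i * B.repr w i := by
    intro z w
    calc (inner ℝ z w : ℝ) = (inner ℝ (B.repr z) (B.repr w) : ℝ) := (B.repr.inner_map_map z w).symm
      _ = ∑ i, B.repr z i * B.repr w i := by
          simp only [PiLp.inner_apply, RCLike.inner_apply, conj_trivial]
          exact Finset.sum_congr rfl fun i _ => mul_comm _ _
  have hxy : dotProduct x (M *ᵥ x)
      = ∑ i, hM.eigenvalues i * (B.repr y i)^2 := by
    have : dotProduct x (M *ᵥ x)
        = (inner ℝ y (WithLp.toLp 2 (M *ᵥ x) : EuclideanSpace ℝ n) : ℝ) := by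
      simp [PiLp.inner_apply, dotProduct, y, mul_comm]
    rw [this, hinner]
    refine Finset.sum_congr rfl fun i _ => ?_
    rw [hrepr i]; ring
  have hxx : dotProduct x x = ∑ i, (B.repr y i)^2 := by
    have : dotProduct x x = (inner ℝ y y : ℝ) := by
      rw [PiLp.inner_apply]; simp [dotProduct, y, sq]
    rw [this, hinner]
    exact Finset.sum_congr rfl fun i _ => (sq (B.repr y i)).symm
  rw [hxy, hxx, Finset.mul_sum]
  exact Finset.sum_le_sum fun i _ =>
    mul_le_mul_of_nonneg_right (hL i) (sq_nonneg _)

lemma sum_ind_real (b p : ℕ) (hp : p < b) :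
    ∑ i : Fin b, (if (i : ℕ) = p then (1 : ℝ) else 0) = 1 := by
  have h : ∀ i : Fin b, ((i : ℕ) = p) ↔ (i = ⟨p, hp⟩) := fun i => by
    simp [Fin.ext_iff]
  simp only [h]
  simp

/-- Lower bound for the `A_α`-spectral radius of `K_b^e`, the complete graph
`K_b` with one edge removed and two pendant vertices attached to its ends. -/
theorem lambdaAlpha_kbE_lower_bound
    (b : ℕ) (hb : 3 ≤ b) (α : ℝ) (hα0 : 0 ≤ α) (hα1 : α < 1) :
    (b : ℝ) - 1 - 2 * (1 - α) / ((b : ℝ) - 1) < lambdaAlpha (kbE b) α := by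
  have hb1 : (1:ℕ) < b := by omega
  set M := aMatrix (kbE b) α with hMdef
  have hadj1 : ∀ i j : Fin b, (kbE b).Adj (Sum.inl i) (Sum.inl j) ↔
      (i ≠ j ∧ ¬(((i:ℕ)=0∧(j:ℕ)=1)∨((i:ℕ)=1∧(j:ℕ)=0))) := fun i j => Iff.rfl
  have hadj2 : ∀ (i : Fin b) (p : Fin 2),
      (kbE b).Adj (Sum.inl i) (Sum.inr p) ↔ ((i:ℕ) = (p:ℕ)) := fun i p => Iff.rfl
  -- degree computation
  have hdeg : ∀ j : Fin b,
      (∑ z : Fin b ⊕ Fin 2, (if (kbE b).Adj (Sum.inl j) z then (1:ℝ) else 0)) = (b:ℝ) - 1 := by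
    intro j
    rw [Fintype.sum_sum_type]
    have e1 : ∀ j' : Fin b, (if (kbE b).Adj (Sum.inl j) (Sum.inl j') then (1:ℝ) else 0)
        = (1 - (if j = j' then (1:ℝ) else 0))
          - ((if (j:ℕ) = 0 ∧ (j':ℕ) = 1 then (1:ℝ) else 0)
             + (if (j:ℕ) = 1 ∧ (j':ℕ) = 0 then (1:ℝ) else 0)) := by
      intro j'
      simp only [hadj1, ne_eq, Fin.ext_iff]
      split_ifs <;> first | ring1 | (exfalso; omega) | norm_num
    have e2 : ∀ p : Fin 2, (if (kbE b).Adj (Sum.inl j) (Sum.inr p) then (1:ℝ) else 0)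
        = (if (j:ℕ) = (p:ℕ) then (1:ℝ) else 0) := by
      intro p; simp only [hadj2]
    simp only [e1, e2]
    rw [Fin.sum_univ_two]
    have c1 : ∑ j' : Fin b, (1 - (if j = j' then (1:ℝ) else 0)) = (b:ℝ) - 1 := by
      rw [Finset.sum_sub_distrib]
      simp [Finset.sum_ite_eq]
    have c2 : ∑ j' : Fin b, ((if (j:ℕ) = 0 ∧ (j':ℕ) = 1 then (1:ℝ) else 0)
        + (if (j:ℕ) = 1 ∧ (j':ℕ) = 0 then (1:ℝ) else 0))
        = (if (j:ℕ) = 0 then (1:ℝ) else 0) + (if (j:ℕ) = 1 then (1:ℝ) else 0) := by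
      rw [Finset.sum_add_distrib]
      congr 1
      · by_cases hj : (j:ℕ) = 0
        · simp only [hj, true_and]
          rw [sum_ind_real b 1 hb1]; simp [hj]
        · simp [hj]
      · by_cases hj : (j:ℕ) = 1
        · simp only [hj, true_and]
          rw [sum_ind_real b 0 (by omega)]; simp [hj]
        · simp [hj]
    rw [Finset.sum_sub_distrib, c1, c2]
    have c3 : ((0:Fin 2):ℕ) = 0 := rfl
    have c4 : ((1:Fin 2):ℕ) = 1 := rfl
    rw [c3, c4]
    ring
  -- M is hermitian
  have hherm : M.IsHermitian := by
    rw [Matrix.IsHermitian, Matrix.conjTranspose_eq_transpose_of_trivial]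
    ext u w
    simp only [Matrix.transpose_apply, hMdef, aMatrix, Matrix.of_apply]
    by_cases h : u = w
    · subst h; rfl
    · rw [if_neg (fun hh => h hh.symm), if_neg h]
      simp only [zero_add]
      by_cases ha : (kbE b).Adj u w
      · rw [if_pos ha.symm, if_pos ha]
      · rw [if_neg (fun hh => ha hh.symm), if_neg ha]
  -- closed form for the entries on the `Fin b` block
  have hentry : ∀ i j : Fin b, M (Sum.inl i) (Sum.inl j)
      = (if i = j then α*((b:ℝ)-1) else (1-α))
        - (if ((i:ℕ)=0∧(j:ℕ)=1)∨((i:ℕ)=1∧(j:ℕ)=0) then (1-α) else 0) := by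
    intro i j
    have step : M (Sum.inl i) (Sum.inl j)
        = (if (Sum.inl i : Fin b ⊕ Fin 2) = Sum.inl j then α * ((b:ℝ)-1) else 0)
          + (if (kbE b).Adj (Sum.inl i) (Sum.inl j) then (1-α) else 0) := by
      simp only [hMdef, aMatrix, Matrix.of_apply]
      by_cases h : (Sum.inl i : Fin b ⊕ Fin 2) = Sum.inl j
      · rw [if_pos h, if_pos h]
        obtain rfl : i = j := Sum.inl.inj h
        rw [hdeg i]
      · rw [if_neg h, if_neg h]
    rw [step]
    simp only [Sum.inl.injEq, hadj1, ne_eq, Fin.ext_iff]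
    split_ifs <;> first | ring1 | (exfalso; omega)
  -- the double sum over the `Fin b` block
  have hsum : ∑ i : Fin b, ∑ j : Fin b, M (Sum.inl i) (Sum.inl j)
      = (b:ℝ)*((b:ℝ)-1) - 2*(1-α) := by
    have hrow : ∀ i : Fin b, ∑ j : Fin b, M (Sum.inl i) (Sum.inl j)
        = ((b:ℝ)-1) - (1-α) * ((if (i:ℕ)=0 then (1:ℝ) else 0)
            + (if (i:ℕ)=1 then (1:ℝ) else 0)) := by
      intro i
      simp only [hentry]
      rw [Finset.sum_sub_distrib]
      have p1 : ∑ j : Fin b, (if i = j then α*((b:ℝ)-1) else (1-α))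
          = α*((b:ℝ)-1) + ((b:ℝ)-1)*(1-α) := by
        have e : ∀ j : Fin b, (if i = j then α*((b:ℝ)-1) else (1-α))
            = (1-α) + (if i = j then α*((b:ℝ)-1) - (1-α) else 0) := by
          intro j; split_ifs <;> ring
        simp only [e]
        rw [Finset.sum_add_distrib, Finset.sum_const, Finset.sum_ite_eq]
        simp only [Finset.card_univ, Fintype.card_fin, Finset.mem_univ, if_true,
          nsmul_eq_mul]
        ring
      have p2 : ∑ j : Fin b, (if ((i:ℕ)=0∧(j:ℕ)=1)∨((i:ℕ)=1∧(j:ℕ)=0) then (1-α) else 0)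
          = (1-α) * ((if (i:ℕ)=0 then (1:ℝ) else 0) + (if (i:ℕ)=1 then (1:ℝ) else 0)) := by
        have e : ∀ j : Fin b, (if ((i:ℕ)=0∧(j:ℕ)=1)∨((i:ℕ)=1∧(j:ℕ)=0) then (1-α) else 0)
            = (1-α) * ((if (i:ℕ)=0 ∧ (j:ℕ)=1 then (1:ℝ) else 0)
                + (if (i:ℕ)=1 ∧ (j:ℕ)=0 then (1:ℝ) else 0)) := by
          intro j; split_ifs <;> first | ring1 | (exfalso; omega)
        simp only [e, ← Finset.mul_sum]
        congr 1
        rw [Finset.sum_add_distrib]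
        congr 1
        · by_cases hi : (i:ℕ) = 0
          · simp only [hi, true_and]; rw [sum_ind_real b 1 hb1]; simp [hi]
          · simp [hi]
        · by_cases hi : (i:ℕ) = 1
          · simp only [hi, true_and]; rw [sum_ind_real b 0 (by omega)]; simp [hi]
          · simp [hi]
      rw [p1, p2]; ring
    simp only [hrow]
    rw [Finset.sum_sub_distrib, Finset.sum_const, Finset.card_univ, Fintype.card_fin,
      ← Finset.mul_sum, Finset.sum_add_distrib, sum_ind_real b 0 (by omega),
      sum_ind_real b 1 hb1, nsmul_eq_mul]
    ring
  -- the test vector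
  set x : (Fin b ⊕ Fin 2) → ℝ := Sum.elim (fun _ => 1) (fun _ => 0) with hxdef
  have hxx : dotProduct x x = (b:ℝ) := by
    simp [hxdef, dotProduct, Fintype.sum_sum_type]
  have hxMx : dotProduct x (Matrix.mulVec M x)
      = ∑ i : Fin b, ∑ j : Fin b, M (Sum.inl i) (Sum.inl j) := by
    simp [hxdef, dotProduct, Matrix.mulVec, Fintype.sum_sum_type]
  have hray := rayleigh_le_sSup_spectrum' M hherm x
  rw [hxx, hxMx, hsum] at hray
  have hb3 : (3:ℝ) ≤ (b:ℝ) := by exact_mod_cast hb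
  have h1 : (0:ℝ) < (b:ℝ) - 1 := by linarith
  have h2 : (0:ℝ) < (b:ℝ) := by linarith
  have hgoal : lambdaAlpha (kbE b) α = sSup (spectrum ℝ M) := by
    rw [lambdaAlpha, hMdef]
  rw [hgoal]
  set S := sSup (spectrum ℝ M) with hSdef
  have key : ((b:ℝ)-1-2*(1-α)/((b:ℝ)-1)) * ((b:ℝ)*((b:ℝ)-1)) < S * ((b:ℝ)*((b:ℝ)-1)) := by
    have expand : ((b:ℝ)-1-2*(1-α)/((b:ℝ)-1)) * ((b:ℝ)*((b:ℝ)-1))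
        = (b:ℝ)*((b:ℝ)-1)^2 - 2*(1-α)*(b:ℝ) := by
      field_simp
    rw [expand]
    nlinarith [mul_le_mul_of_nonneg_right hray (le_of_lt h1), hα1, h1, h2]
  exact lt_of_mul_lt_mul_right key (by positivity)
end

section
/- Let n ≥ b ≥ 3 and α ∈ [0,1). Let G⋆ be a connected K_{1,b}-minor free graph on n vertices attaining the maximum A_α-spectral radius among all connected K_{1,b}-minor free graphs on n vertices, and let x be its Perron vector. Suppose uv is an edge of G⋆ with d_{G⋆}(u) = d_{G⋆}(v), let R = N_{G⋆}(u) ∩ N_{G⋆}(v), and suppose N_{G⋆}(u) ∖ (R ∪ {v}) = {u₁} and N_{G⋆}(v) ∖ (R ∪ {u}) = {v₁} are singletons. If x_u ≥ x_v, then x_{u₁} ≥ x_{v₁}. -/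
open scoped Classical


private lemma rowEq {n : ℕ} (G : SimpleGraph (Fin n)) (α lam : ℝ) (x : Fin n → ℝ)
    (heig : (aMatrix G α).mulVec x = lam • x) (u : Fin n) :
    lam * x u = α * (∑ z, (if G.Adj u z then (1:ℝ) else 0)) * x u
      + (1-α) * ∑ w ∈ Finset.univ.filter (fun w => G.Adj u w), x w := by
  have h := congrFun heig u
  simp only [Matrix.mulVec, dotProduct, aMatrix, Matrix.of_apply, Pi.smul_apply,
    smul_eq_mul] at h
  rw [← h]
  simp only [add_mul, ite_mul, zero_mul, Finset.sum_add_distrib, Finset.sum_ite_eq,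
    Finset.mem_univ, if_true]
  simp [Finset.sum_filter, Finset.mul_sum, mul_ite]

/-- Monotonicity of Perron entries along twin-like edges in an `A_α`-extremal
connected `K_{1,b}`-minor free graph: if `uv ∈ E`, `d(u) = d(v)`,
`R = N(u) ∩ N(v)`, `N(u) ∖ (R ∪ {v}) = {u₁}`, `N(v) ∖ (R ∪ {u}) = {v₁}`
and `x_u ≥ x_v`, then `x_{u₁} ≥ x_{v₁}`. -/
theorem extremal_K1b_perron_private_neighbors
    (n b : ℕ) (hn : b ≤ n) (hb : 3 ≤ b)
    (α : ℝ) (hα0 : 0 ≤ α) (hα1 : α < 1)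
    (G : SimpleGraph (Fin n)) (hconn : G.Connected) (hfree : kabMinorFree 1 b G)
    (hmax : ∀ H : SimpleGraph (Fin n), H.Connected → kabMinorFree 1 b H →
      lambdaAlpha H α ≤ lambdaAlpha G α)
    (x : Fin n → ℝ) (hx : ∀ v, 0 < x v)
    (heig : (aMatrix G α).mulVec x = lambdaAlpha G α • x)
    (u v u₁ v₁ : Fin n) (huv : G.Adj u v)
    (hdeg : (G.neighborSet u).ncard = (G.neighborSet v).ncard)
    (hu1 : G.neighborSet u \ (G.neighborSet u ∩ G.neighborSet v ∪ {v}) = {u₁})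
    (hv1 : G.neighborSet v \ (G.neighborSet u ∩ G.neighborSet v ∪ {u}) = {v₁})
    (hxuv : x v ≤ x u) :
    x v₁ ≤ x u₁ := by
  classical
  set lam := lambdaAlpha G α with hlam
  -- facts about u₁ from hu1
  have hmemu : ∀ w : Fin n, (G.Adj u w ∧ ¬((G.Adj u w ∧ G.Adj v w) ∨ w = v)) ↔ w = u₁ := by
    intro w
    have := Set.ext_iff.mp hu1 w
    simp only [Set.mem_diff, Set.mem_union, Set.mem_inter_iff, Set.mem_singleton_iff,
      SimpleGraph.mem_neighborSet] at this
    tauto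
  have hmemv : ∀ w : Fin n, (G.Adj v w ∧ ¬((G.Adj u w ∧ G.Adj v w) ∨ w = u)) ↔ w = v₁ := by
    intro w
    have := Set.ext_iff.mp hv1 w
    simp only [Set.mem_diff, Set.mem_union, Set.mem_inter_iff, Set.mem_singleton_iff,
      SimpleGraph.mem_neighborSet] at this
    tauto
  have hu₁ := (hmemu u₁).mpr rfl
  have hv₁ := (hmemv v₁).mpr rfl
  -- Finsets
  set Rf : Finset (Fin n) := Finset.univ.filter (fun w => G.Adj u w ∧ G.Adj v w) with hRf
  have hmemRf : ∀ w : Fin n, w ∈ Rf ↔ (G.Adj u w ∧ G.Adj v w) := by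
    intro w; rw [hRf]; simp
  have hNu : Finset.univ.filter (fun w => G.Adj u w) = insert u₁ (insert v Rf) := by
    ext w
    simp only [Finset.mem_filter, Finset.mem_univ, true_and, Finset.mem_insert, hmemRf]
    constructor
    · intro hw
      by_cases h1 : (G.Adj u w ∧ G.Adj v w) ∨ w = v
      · tauto
      · exact Or.inl ((hmemu w).mp ⟨hw, h1⟩)
    · rintro (rfl | rfl | hw)
      · exact hu₁.1
      · exact huv
      · exact hw.1
  have hNv : Finset.univ.filter (fun w => G.Adj v w) = insert v₁ (insert u Rf) := by
    ext w
    simp only [Finset.mem_filter, Finset.mem_univ, true_and, Finset.mem_insert, hmemRf]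
    constructor
    · intro hw
      by_cases h1 : (G.Adj u w ∧ G.Adj v w) ∨ w = u
      · tauto
      · exact Or.inl ((hmemv w).mp ⟨hw, h1⟩)
    · rintro (rfl | rfl | hw)
      · exact hv₁.1
      · exact huv.symm
      · exact hw.2
  have hu₁ni : u₁ ∉ insert v Rf := by
    simp only [Finset.mem_insert, hmemRf]
    intro h
    rcases h with h | h
    · exact hu₁.2 (Or.inr h)
    · exact hu₁.2 (Or.inl h)
  have hv₁ni : v₁ ∉ insert u Rf := by
    simp only [Finset.mem_insert, hmemRf]
    intro h
    rcases h with h | h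
    · exact hv₁.2 (Or.inr h)
    · exact hv₁.2 (Or.inl h)
  have hvnr : v ∉ Rf := by
    rw [hmemRf]
    intro h
    exact G.loopless.irrefl v h.2
  have hunr : u ∉ Rf := by
    rw [hmemRf]
    intro h
    exact G.loopless.irrefl u h.1
  set S : ℝ := ∑ w ∈ Rf, x w with hS
  have hSnn : 0 ≤ S := Finset.sum_nonneg fun w _ => (hx w).le
  -- degrees
  have hdcard : ∀ w : Fin n, (∑ z, (if G.Adj w z then (1:ℝ) else 0))
      = ((G.neighborSet w).ncard : ℝ) := by
    intro w
    rw [Finset.sum_boole, Set.ncard_eq_toFinset_card']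
    congr 2
    ext z
    simp [SimpleGraph.neighborSet]
    exact Set.mem_toFinset.symm
  set d : ℝ := ((G.neighborSet u).ncard : ℝ) with hd
  have hdv : ((G.neighborSet v).ncard : ℝ) = d := by rw [hd, hdeg]
  -- row equations
  have hu_eq := rowEq G α lam x heig u
  have hv_eq := rowEq G α lam x heig v
  rw [hdcard u, hNu, Finset.sum_insert hu₁ni,
    Finset.sum_insert hvnr, ← hS, ← hd] at hu_eq
  rw [hdcard v, hNv, Finset.sum_insert hv₁ni,
    Finset.sum_insert hunr, ← hS, hdv] at hv_eq
  -- lam > α d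
  have hpos : α * d < lam := by
    have h1 : 0 < x u₁ + (x v + S) := by nlinarith [hx u₁, hx v]
    have h2 : 0 < (1 - α) * (x u₁ + (x v + S)) := mul_pos (by linarith) h1
    by_contra hle
    push_neg at hle
    nlinarith [hx u]
  nlinarith [mul_nonneg (by linarith : (0:ℝ) ≤ lam - α * d + (1 - α))
      (sub_nonneg.mpr hxuv), sub_pos.mpr hα1]
end
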